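/- (Theorem 2: sufficiently low filter gain for a numerical constraint.) Let g be C² on an open set containing the compact box I ⊂ ℝ^{n_u}, with strict univariate Lipschitz constants κ_i > 0 and strict second-derivative Lipschitz constants M_{i₁i₂} > 0 on I; let L̄ = Σ_i κ_i(u^U_i − u^L_i) and Q̄ = Σ_{i₁}Σ_{i₂} M_{i₁i₂}(u^U_{i₁} − u^L_{i₁})(u^U_{i₂} − u^L_{i₂}). Let u, v ∈ I, ε > 0, δ > 0, suppose g(u) ≤ 0, and suppose that if g(u) ≥ −ε then ∇g(u)ᵀ(v − u) ≤ −δ. Then for every K ∈ [0, min(1, ε/L̄, 2δ/Q̄)], the point u + K(v − u) satisfies g(u + K(v − u)) ≤ 0. -/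

import Mathlib

set_option maxHeartbeats 1600000 in
/-- **Theorem 2.** Sufficiently low filter gain for a numerical constraint:
with `L̄ = Σ_i κ i (uU i - uL i)`, `Q̄ = Σ_{i₁} Σ_{i₂} M i₁ i₂ (uU i₁ - uL i₁)(uU i₂ - uL i₂)`,
`g(u) ≤ 0`, and the descent condition `∇g(u)ᵀ(v-u) ≤ -δ` holding whenever `g(u) ≥ -ε`,
every `K ∈ [0, min 1 (min (ε/L̄) (2δ/Q̄))]` yields `g (u + K • (v - u)) ≤ 0`. -/
theorem filter_gain_numerical_constraint
    {n : ℕ} (uL uU : Fin n → ℝ)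
    (g : (Fin n → ℝ) → ℝ)
    (U : Set (Fin n → ℝ)) (hUopen : IsOpen U) (hIU : Set.Icc uL uU ⊆ U)
    (hg : ContDiffOn ℝ 2 g U)
    (κ : Fin n → ℝ) (hκpos : ∀ i, 0 < κ i)
    (hκ : ∀ u ∈ Set.Icc uL uU, ∀ i, |fderiv ℝ g u (Pi.single i 1)| < κ i)
    (M : Fin n → Fin n → ℝ) (hMpos : ∀ i₁ i₂, 0 < M i₁ i₂)
    (hM : ∀ u ∈ Set.Icc uL uU, ∀ i₁ i₂,
      |fderiv ℝ (fun x => fderiv ℝ g x (Pi.single i₁ 1)) u (Pi.single i₂ 1)| < M i₁ i₂)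
    (u v : Fin n → ℝ) (hu : u ∈ Set.Icc uL uU) (hv : v ∈ Set.Icc uL uU)
    (ε δ : ℝ) (hε : 0 < ε) (hδ : 0 < δ)
    (hgu : g u ≤ 0)
    (hdesc : g u ≥ -ε → fderiv ℝ g u (v - u) ≤ -δ)
    (K : ℝ)
    (hK : K ∈ Set.Icc 0
      (min 1 (min (ε / ∑ i, κ i * (uU i - uL i))
        (2 * δ / ∑ i₁, ∑ i₂, M i₁ i₂ * (uU i₁ - uL i₁) * (uU i₂ - uL i₂))))) :
    g (u + K • (v - u)) ≤ 0 := by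
  obtain ⟨hK0, hKm⟩ := hK
  rcases eq_or_lt_of_le hK0 with hK0' | hKpos
  · simp [← hK0', hgu]
  set w : Fin n → ℝ := v - u with hw
  set Lb : ℝ := ∑ i, κ i * (uU i - uL i) with hLb
  set Qb : ℝ := ∑ i₁, ∑ i₂, M i₁ i₂ * (uU i₁ - uL i₁) * (uU i₂ - uL i₂) with hQb
  have hK1 : K ≤ 1 := hKm.trans (min_le_left _ _)
  have hKL : K ≤ ε / Lb := hKm.trans ((min_le_right _ _).trans (min_le_left _ _))
  have hKQ : K ≤ 2 * δ / Qb := hKm.trans ((min_le_right _ _).trans (min_le_right _ _))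
  have hwd : ∀ i, 0 ≤ uU i - uL i := fun i => by
    have h1 := hu.1 i; have h2 := hu.2 i; simp only at h1 h2; linarith
  have habs : ∀ i, |w i| ≤ uU i - uL i := fun i => by
    have h1 := hu.1 i; have h2 := hu.2 i; have h3 := hv.1 i; have h4 := hv.2 i
    simp only at h1 h2 h3 h4
    have : w i = v i - u i := rfl
    rw [this, abs_sub_le_iff]; constructor <;> linarith
  have hLb0 : 0 ≤ Lb := Finset.sum_nonneg fun i _ => mul_nonneg (hκpos i).le (hwd i)
  have hQb0 : 0 ≤ Qb := Finset.sum_nonneg fun i _ => Finset.sum_nonneg fun j _ =>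
    mul_nonneg (mul_nonneg (hMpos i j).le (hwd i)) (hwd j)
  have hKLε : K * Lb ≤ ε := by
    rcases eq_or_lt_of_le hLb0 with h | h
    · rw [← h]; simpa using hε.le
    · exact (le_div_iff₀ h).mp hKL
  have hKQδ : K * Qb ≤ 2 * δ := by
    rcases eq_or_lt_of_le hQb0 with h | h
    · rw [← h]; simpa using by positivity
    · exact (le_div_iff₀ h).mp hKQ
  -- the segment
  set p : ℝ → Fin n → ℝ := fun t => u + t • w with hp
  have hseg : ∀ t ∈ Set.Icc (0:ℝ) 1, p t ∈ Set.Icc uL uU := by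
    intro t ht
    have h := (convex_Icc uL uU) hu hv (sub_nonneg.2 ht.2) ht.1 (by ring)
    have he : (1 - t) • u + t • v = p t := by
      simp only [hp, hw, smul_sub, sub_smul, one_smul]; abel
    rwa [he] at h
  have hsegU : ∀ t ∈ Set.Icc (0:ℝ) 1, p t ∈ U := fun t ht => hIU (hseg t ht)
  -- expansion of a linear functional along coordinates
  have expand : ∀ (L : (Fin n → ℝ) →L[ℝ] ℝ) (y : Fin n → ℝ),
      L y = ∑ i, y i * L (Pi.single i 1) := by
    intro L y
    conv_lhs => rw [← Finset.univ_sum_single y, map_sum]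
    refine Finset.sum_congr rfl fun i _ => ?_
    have he : (Pi.single i (y i) : Fin n → ℝ) = y i • (Pi.single i 1 : Fin n → ℝ) := by
      ext j; by_cases h : j = i <;> simp [Pi.single_apply, h]
    rw [he, L.map_smul, smul_eq_mul]
  -- first-order bound
  have hLbd : ∀ x ∈ Set.Icc uL uU, |fderiv ℝ g x w| ≤ Lb := by
    intro x hx
    rw [expand]
    refine (Finset.abs_sum_le_sum_abs _ _).trans (Finset.sum_le_sum fun i _ => ?_)
    rw [abs_mul]
    calc |w i| * |fderiv ℝ g x (Pi.single i 1)|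
        ≤ (uU i - uL i) * κ i :=
          mul_le_mul (habs i) (hκ x hx i).le (abs_nonneg _) (hwd i)
      _ = κ i * (uU i - uL i) := mul_comm _ _
  -- differentiability facts
  have hgC1 : ContDiffOn ℝ 1 g U := hg.of_le (by norm_num)
  have hgdiff : ∀ x ∈ U, HasFDerivAt g (fderiv ℝ g x) x := fun x hx =>
    ((hgC1.differentiableOn one_ne_zero).differentiableAt (hUopen.mem_nhds hx)).hasFDerivAt
  have hGc : ContDiffOn ℝ 1 (fderiv ℝ g) U := hg.fderiv_of_isOpen hUopen (by norm_num)
  have hGdiff : ∀ x ∈ U, HasFDerivAt (fderiv ℝ g) (fderiv ℝ (fderiv ℝ g) x) x := fun x hx =>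
    ((hGc.differentiableOn one_ne_zero).differentiableAt (hUopen.mem_nhds hx)).hasFDerivAt
  have hsecond : ∀ x ∈ U, ∀ c : Fin n → ℝ,
      HasFDerivAt (fun z => fderiv ℝ g z c)
        ((ContinuousLinearMap.apply ℝ ℝ c).comp (fderiv ℝ (fderiv ℝ g) x)) x := by
    intro x hx c
    exact (ContinuousLinearMap.apply ℝ ℝ c).hasFDerivAt.comp x (hGdiff x hx)
  -- identify the second derivative entries
  have hBentry : ∀ x ∈ Set.Icc uL uU, ∀ i j,
      |fderiv ℝ (fderiv ℝ g) x (Pi.single j 1) (Pi.single i 1)| < M i j := by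
    intro x hx i j
    have h := hM x hx i j
    have e := (hsecond x (hIU hx) (Pi.single i 1)).fderiv
    rw [e] at h
    simpa using h
  -- second-order bound
  have expand2 : ∀ (B : (Fin n → ℝ) →L[ℝ] ((Fin n → ℝ) →L[ℝ] ℝ)) (y z : Fin n → ℝ),
      B y z = ∑ j, ∑ i, y j * (z i * B (Pi.single j 1) (Pi.single i 1)) := by
    intro B y z
    have h1 : B y = ∑ j, y j • B (Pi.single j 1) := by
      conv_lhs => rw [← Finset.univ_sum_single y, map_sum]
      refine Finset.sum_congr rfl fun j _ => ?_
      have he : (Pi.single j (y j) : Fin n → ℝ) = y j • (Pi.single j 1 : Fin n → ℝ) := by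
        ext i; by_cases h : i = j <;> simp [Pi.single_apply, h]
      rw [he, B.map_smul]
    rw [h1, ContinuousLinearMap.sum_apply]
    refine Finset.sum_congr rfl fun j _ => ?_
    rw [ContinuousLinearMap.smul_apply, smul_eq_mul,
      expand (B (Pi.single j 1)) z, Finset.mul_sum]
  have hQbd : ∀ x ∈ Set.Icc uL uU, |fderiv ℝ (fderiv ℝ g) x w w| ≤ Qb := by
    intro x hx
    rw [expand2]
    refine (Finset.abs_sum_le_sum_abs _ _).trans ?_
    have step : ∀ j, |∑ i, w j * (w i * fderiv ℝ (fderiv ℝ g) x (Pi.single j 1) (Pi.single i 1))|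
        ≤ ∑ i, M i j * (uU i - uL i) * (uU j - uL j) := by
      intro j
      refine (Finset.abs_sum_le_sum_abs _ _).trans (Finset.sum_le_sum fun i _ => ?_)
      rw [abs_mul, abs_mul]
      calc |w j| * (|w i| * |fderiv ℝ (fderiv ℝ g) x (Pi.single j 1) (Pi.single i 1)|)
          ≤ (uU j - uL j) * ((uU i - uL i) * M i j) := by
            refine mul_le_mul (habs j) ?_ (by positivity) (hwd j)
            exact mul_le_mul (habs i) (hBentry x hx i j).le (abs_nonneg _) (hwd i)
        _ = M i j * (uU i - uL i) * (uU j - uL j) := by ring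
    refine (Finset.sum_le_sum fun j _ => step j).trans ?_
    rw [Finset.sum_comm]
  -- derivative of the path
  have hpderiv : ∀ t : ℝ, HasDerivAt p w t := fun t => by
    simpa [hp] using ((hasDerivAt_id t).smul_const w).const_add u
  have hφ : ∀ t ∈ Set.Icc (0:ℝ) 1,
      HasDerivAt (fun s => g (p s)) (fderiv ℝ g (p t) w) t := fun t ht => by
    exact (hgdiff _ (hsegU t ht)).comp_hasDerivAt t (hpderiv t)
  have hψ : ∀ t ∈ Set.Icc (0:ℝ) 1,
      HasDerivAt (fun s => fderiv ℝ g (p s) w) (fderiv ℝ (fderiv ℝ g) (p t) w w) t := by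
    intro t ht
    have h := (hsecond (p t) (hsegU t ht) w).comp_hasDerivAt t (hpderiv t)
    exact h
  have hp0 : p 0 = u := by simp [hp]
  have hcontφ : ContinuousOn (fun s => g (p s)) (Set.Icc 0 K) := fun t ht =>
    (hφ t ⟨ht.1, ht.2.trans hK1⟩).continuousAt.continuousWithinAt
  -- case split
  rcases lt_or_ge (g u) (-ε) with hcase | hcase
  · -- far from the boundary: first-order bound suffices
    obtain ⟨c, hc, hceq⟩ := exists_hasDerivAt_eq_slope (fun s => g (p s))
      (fun s => fderiv ℝ g (p s) w) hKpos hcontφ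
      (fun t ht => hφ t ⟨ht.1.le, ht.2.le.trans hK1⟩)
    have hc01 : c ∈ Set.Icc (0:ℝ) 1 := ⟨hc.1.le, hc.2.le.trans hK1⟩
    have hψc : fderiv ℝ g (p c) w ≤ Lb := (le_abs_self _).trans (hLbd _ (hseg c hc01))
    have hslope : g (p K) - g (p 0) = K * fderiv ℝ g (p c) w := by
      rw [sub_zero, eq_div_iff (ne_of_gt hKpos)] at hceq
      linarith [hceq]
    rw [hp0] at hslope
    have : g (p K) ≤ g u + K * Lb := by
      nlinarith [mul_le_mul_of_nonneg_left hψc hK0]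
    calc g (u + K • w) = g (p K) := rfl
      _ ≤ g u + K * Lb := this
      _ ≤ 0 := by linarith
  · -- near the boundary: second-order argument
    have hD : fderiv ℝ g u w ≤ -δ := hdesc (by linarith)
    set D : ℝ := fderiv ℝ g u w with hDdef
    set χ : ℝ → ℝ := fun t => g (p t) - (g (p 0) + t * D + Qb * t ^ 2 / 2) with hχdef
    have hχderiv : ∀ t ∈ Set.Icc (0:ℝ) 1,
        HasDerivAt χ (fderiv ℝ g (p t) w - (D + Qb * t)) t := by
      intro t ht
      have h1 := hφ t ht
      have h2 : HasDerivAt (fun s : ℝ => g (p 0) + s * D + Qb * s ^ 2 / 2) (D + Qb * t) t := by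
        have ha : HasDerivAt (fun s : ℝ => s * D) D t := by
          simpa using (hasDerivAt_id t).mul_const D
        have hb : HasDerivAt (fun s : ℝ => Qb * s ^ 2 / 2) (Qb * t) t := by
          have := ((hasDerivAt_pow 2 t).const_mul Qb).div_const 2
          refine this.congr_deriv ?_
          show Qb * (↑2 * t ^ 1) / 2 = Qb * t
          push_cast; ring
        exact (ha.const_add (g (p 0))).add hb
      exact h1.sub h2
    -- derivative of χ is nonpositive on (0, K)
    have hχ' : ∀ t ∈ Set.Ioo (0:ℝ) K, fderiv ℝ g (p t) w - (D + Qb * t) ≤ 0 := by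
      intro t ht
      have ht1 : t ∈ Set.Icc (0:ℝ) 1 := ⟨ht.1.le, (ht.2.le.trans hK1)⟩
      have hcontψ : ContinuousOn (fun s => fderiv ℝ g (p s) w) (Set.Icc 0 t) := fun s hs =>
        (hψ s ⟨hs.1, hs.2.trans ht1.2⟩).continuousAt.continuousWithinAt
      obtain ⟨c, hc, hceq⟩ := exists_hasDerivAt_eq_slope (fun s => fderiv ℝ g (p s) w)
        (fun s => fderiv ℝ (fderiv ℝ g) (p s) w w) ht.1 hcontψ
        (fun s hs => hψ s ⟨hs.1.le, hs.2.le.trans ht1.2⟩)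
      have hc01 : c ∈ Set.Icc (0:ℝ) 1 := ⟨hc.1.le, hc.2.le.trans ht1.2⟩
      have hQc : fderiv ℝ (fderiv ℝ g) (p c) w w ≤ Qb :=
        (le_abs_self _).trans (hQbd _ (hseg c hc01))
      have hslope : fderiv ℝ g (p t) w - fderiv ℝ g (p 0) w
          = t * fderiv ℝ (fderiv ℝ g) (p c) w w := by
        rw [sub_zero, eq_div_iff (ne_of_gt ht.1)] at hceq
        linarith [hceq]
      rw [hp0] at hslope
      have h1 : t * fderiv ℝ (fderiv ℝ g) (p c) w w ≤ t * Qb :=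
        mul_le_mul_of_nonneg_left hQc ht.1.le
      rw [hDdef]
      nlinarith
    -- MVT on χ
    have hcontχ : ContinuousOn χ (Set.Icc 0 K) := fun t ht =>
      (hχderiv t ⟨ht.1, ht.2.trans hK1⟩).continuousAt.continuousWithinAt
    obtain ⟨c, hc, hceq⟩ := exists_hasDerivAt_eq_slope χ
      (fun t => fderiv ℝ g (p t) w - (D + Qb * t)) hKpos hcontχ
      (fun t ht => hχderiv t ⟨ht.1.le, ht.2.le.trans hK1⟩)
    rw [sub_zero, eq_div_iff (ne_of_gt hKpos)] at hceq
    have hχK : χ K ≤ χ 0 := by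
      have h0 := hχ' c hc
      nlinarith [mul_nonpos_of_nonpos_of_nonneg h0 hK0]
    have hχ0 : χ 0 = 0 := by simp [hχdef]
    rw [hχ0] at hχK
    have hexp : g (p K) ≤ g (p 0) + K * D + Qb * K ^ 2 / 2 := by
      simp only [hχdef] at hχK
      linarith
    rw [hp0] at hexp
    have h1 : K * D ≤ K * (-δ) := mul_le_mul_of_nonneg_left hD hK0
    have h2 : Qb * K ^ 2 / 2 ≤ K * δ := by nlinarith [hKQδ, hK0]
    show g (p K) ≤ 0
    linarith [hexp, h1, h2, hgu]
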